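/- Let f (with white fixed point set W) be a decorated permutation of [2n] of type C, let 𝓘 be its Grassmann necklace, and let M be the positroid of 𝓘. Let C be a weakly separated collection in M and let I ∈ C be pair-free. If a ∈ [n] and f⁻¹(a) ∈ [n] with f⁻¹(a) < a, then a' ∈ I. -/

import Mathlib

open Finset

/-- Position of `x` in the cyclic order on `[m] = {1,…,m}` starting at `a`:
`a` has position `0`, `a+1` position `1`, …, `a-1` position `m-1`. -/
def cpos (m a x : ℕ) : ℕ := (x + m - a) % m

/-- The strict cyclic order `x <_a y` on `[m]`. -/
def clt (m a x y : ℕ) : Prop := cpos m a x < cpos m a y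

instance (m a x y : ℕ) : Decidable (clt m a x y) :=
  inferInstanceAs (Decidable (_ < _))

/-- `I` and `J` are weakly separated as subsets of `[m]`: there do not exist
`c ∈ [m]` and `x₁ <_c x₂ <_c x₃ <_c x₄` with `x₁, x₃ ∈ I∖J` and `x₂, x₄ ∈ J∖I`. -/
def WSep (m : ℕ) (I J : Finset ℕ) : Prop :=
  ¬ ∃ c x₁ x₂ x₃ x₄ : ℕ, c ∈ Finset.Icc 1 m ∧
      x₁ ∈ I \ J ∧ x₃ ∈ I \ J ∧ x₂ ∈ J \ I ∧ x₄ ∈ J \ I ∧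
      clt m c x₁ x₂ ∧ clt m c x₂ x₃ ∧ clt m c x₃ x₄

/-- A weakly separated collection of `k`-element subsets of `[m]`. -/
def IsWSColl (m k : ℕ) (C : Finset (Finset ℕ)) : Prop :=
  (∀ I ∈ C, I ⊆ Finset.Icc 1 m ∧ I.card = k) ∧
    ∀ I ∈ C, ∀ J ∈ C, WSep m I J

/-- `Ī := [2n] ∖ {i' : i ∈ I}` where `i' = 2n+1-i`. -/
def bar (n : ℕ) (I : Finset ℕ) : Finset ℕ :=
  Finset.Icc 1 (2 * n) \ I.image fun i => 2 * n + 1 - i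

/-- A collection is symmetric if it is closed under `I ↦ Ī`. -/
def IsSym (n : ℕ) (C : Finset (Finset ℕ)) : Prop := ∀ I ∈ C, bar n I ∈ C

/-- `I` has a full pair at `{a, a'}`. -/
def FullPair (n : ℕ) (I : Finset ℕ) (a : ℕ) : Prop := a ∈ I ∧ 2 * n + 1 - a ∈ I

/-- `I` has an empty pair at `{a, a'}`. -/
def EmptyPair (n : ℕ) (I : Finset ℕ) (a : ℕ) : Prop := a ∉ I ∧ 2 * n + 1 - a ∉ I

instance (n : ℕ) (I : Finset ℕ) (a : ℕ) : Decidable (FullPair n I a) :=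
  inferInstanceAs (Decidable (_ ∈ I ∧ _ ∈ I))

instance (n : ℕ) (I : Finset ℕ) (a : ℕ) : Decidable (EmptyPair n I a) :=
  inferInstanceAs (Decidable (_ ∉ I ∧ _ ∉ I))

/-- `I` is pair-free: it has no full pair. -/
def PairFree (n : ℕ) (I : Finset ℕ) : Prop :=
  ∀ a ∈ Finset.Icc 1 n, ¬ FullPair n I a

instance (n : ℕ) (I : Finset ℕ) : Decidable (PairFree n I) :=
  inferInstanceAs (Decidable (∀ a ∈ Finset.Icc 1 n, ¬ FullPair n I a))

/-- `I` is admissible: `I` and `Ī` are weakly separated. -/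
def Admissible (n : ℕ) (I : Finset ℕ) : Prop := WSep (2 * n) I (bar n I)

/-- `I` is left-handed: admissible, has at least one full pair, and every full
pair of `I` is above every empty pair of `I`. -/
def LeftHanded (n : ℕ) (I : Finset ℕ) : Prop :=
  Admissible n I ∧ (∃ a ∈ Finset.Icc 1 n, FullPair n I a) ∧
    ∀ a ∈ Finset.Icc 1 n, ∀ b ∈ Finset.Icc 1 n,
      FullPair n I a → EmptyPair n I b → a < b

/-- The Gale order `I ≤_a J`: comparing the sorted lists of positions (in the
cyclic order starting at `a`) elementwise. -/
def galeLe (m a : ℕ) (I J : Finset ℕ) : Prop :=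
  List.Forall₂ (· ≤ ·) ((I.image (cpos m a)).sort (· ≤ ·))
    ((J.image (cpos m a)).sort (· ≤ ·))

/-- A Grassmann necklace of type `(n, 2n)`: a sequence `I_1, …, I_{2n}` of
`n`-element subsets of `[2n]` with `I_i ∖ {i} ⊆ I_{i+1}` (indices mod `2n`). -/
def IsNecklace (n : ℕ) (ℐ : ℕ → Finset ℕ) : Prop :=
  (∀ a ∈ Finset.Icc 1 (2 * n), ℐ a ⊆ Finset.Icc 1 (2 * n) ∧ (ℐ a).card = n) ∧
    ∀ i ∈ Finset.Icc 1 (2 * n), ℐ i \ {i} ⊆ ℐ (i % (2 * n) + 1)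

/-- A Grassmann necklace is of type C if `I_{i'} = bar (I_{i+1})` (indices mod `2n`). -/
def IsTypeC (n : ℕ) (ℐ : ℕ → Finset ℕ) : Prop :=
  ∀ i ∈ Finset.Icc 1 (2 * n), ℐ (2 * n + 1 - i) = bar n (ℐ (i % (2 * n) + 1))

/-- The positroid of a Grassmann necklace: all `n`-element subsets `J` of `[2n]`
with `I_a ≤_a J` for all `a ∈ [2n]`. -/
def positroid (n : ℕ) (ℐ : ℕ → Finset ℕ) : Set (Finset ℕ) :=
  {J | J ⊆ Finset.Icc 1 (2 * n) ∧ J.card = n ∧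
    ∀ a ∈ Finset.Icc 1 (2 * n), galeLe (2 * n) a (ℐ a) J}

/-- A weakly separated collection in the positroid of the necklace `ℐ`:
`{I_1,…,I_{2n}} ⊆ C ⊆ M` and `C` is pairwise weakly separated. -/
def IsWSCollIn (n : ℕ) (ℐ : ℕ → Finset ℕ) (C : Finset (Finset ℕ)) : Prop :=
  (∀ a ∈ Finset.Icc 1 (2 * n), ℐ a ∈ C) ∧ (∀ J ∈ C, J ∈ positroid n ℐ) ∧
    ∀ I ∈ C, ∀ J ∈ C, WSep (2 * n) I J

/-- A decorated permutation of `[2n]` of type C: a bijection `f` of `[2n]` with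
`f(i') = (f(i))'`, together with a set `W` of white fixed points such that a
fixed point `i` lies in `W` iff `i'` does not. -/
def IsDecPermC (n : ℕ) (f : Equiv.Perm ℕ) (W : Finset ℕ) : Prop :=
  (∀ i ∈ Finset.Icc 1 (2 * n), f i ∈ Finset.Icc 1 (2 * n)) ∧
  (∀ i ∈ Finset.Icc 1 (2 * n), f (2 * n + 1 - i) = 2 * n + 1 - f i) ∧
  (∀ w ∈ W, w ∈ Finset.Icc 1 (2 * n) ∧ f w = w) ∧
  (∀ i ∈ Finset.Icc 1 (2 * n), f i = i → (i ∈ W ↔ 2 * n + 1 - i ∉ W))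

/-- The Grassmann necklace of a decorated permutation:
`I_a = {i ∈ [2n] : i ≠ f⁻¹(i) and i <_a f⁻¹(i)} ∪ W`. -/
def necklaceOf (n : ℕ) (f : Equiv.Perm ℕ) (W : Finset ℕ) (a : ℕ) : Finset ℕ :=
  ((Finset.Icc 1 (2 * n)).filter fun i => i ≠ f.symm i ∧ clt (2 * n) a i (f.symm i)) ∪ W

/-- `(i,j)` is an alignment of `f`: the numbers `i, f(i), f(j), j` are distinct
and appear in cyclic order. -/
def IsAlignment (n : ℕ) (f : Equiv.Perm ℕ) (i j : ℕ) : Prop :=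
  ([i, f i, f j, j] : List ℕ).Pairwise (· ≠ ·) ∧
    ∃ c ∈ Finset.Icc 1 (2 * n), clt (2 * n) c i (f i) ∧
      clt (2 * n) c (f i) (f j) ∧ clt (2 * n) c (f j) j

section Aux

lemma cpos_eq {m a x : ℕ} (ha : 1 ≤ a) (ham : a ≤ m) (hxm : x ≤ m) :
    cpos m a x = if a ≤ x then x - a else x + m - a := by
  unfold cpos
  split
  · have h : x + m - a = x - a + m := by omega
    rw [h, Nat.add_mod_right, Nat.mod_eq_of_lt (by omega)]
  · exact Nat.mod_eq_of_lt (by omega)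

lemma clt_iff {m a x y : ℕ} (ha1 : 1 ≤ a) (ham : a ≤ m) (hx : x ≤ m) (hy : y ≤ m) :
    clt m a x y ↔ (if a ≤ x then x - a else x + m - a) < (if a ≤ y then y - a else y + m - a) := by
  unfold clt
  rw [cpos_eq ha1 ham hx, cpos_eq ha1 ham hy]

lemma symm_mem_Icc {n : ℕ} {f : Equiv.Perm ℕ}
    (hmap : ∀ i ∈ Finset.Icc 1 (2*n), f i ∈ Finset.Icc 1 (2*n))
    {j : ℕ} (hj : j ∈ Finset.Icc 1 (2*n)) : f.symm j ∈ Finset.Icc 1 (2*n) := by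
  have himg : (Finset.Icc 1 (2*n)).image f = Finset.Icc 1 (2*n) := by
    apply Finset.eq_of_subset_of_card_le
    · intro x hx
      obtain ⟨i, hi, rfl⟩ := Finset.mem_image.mp hx
      exact hmap i hi
    · rw [Finset.card_image_of_injective _ f.injective]
  rw [← himg] at hj
  obtain ⟨i, hi, hfi⟩ := Finset.mem_image.mp hj
  rwa [← hfi, Equiv.symm_apply_apply]

lemma symm_prime {n : ℕ} {f : Equiv.Perm ℕ}
    (hmap : ∀ i ∈ Finset.Icc 1 (2*n), f i ∈ Finset.Icc 1 (2*n))
    (hsym : ∀ i ∈ Finset.Icc 1 (2*n), f (2*n+1-i) = 2*n+1 - f i)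
    {j : ℕ} (hj : j ∈ Finset.Icc 1 (2*n)) :
    f.symm (2*n+1-j) = 2*n+1 - f.symm j := by
  have hi := symm_mem_Icc hmap hj
  have h2 := hsym (f.symm j) hi
  rw [Equiv.apply_symm_apply] at h2
  rw [← h2, Equiv.symm_apply_apply]

lemma pairfree_cover {n : ℕ} {I : Finset ℕ} (hsub : I ⊆ Finset.Icc 1 (2*n))
    (hcard : I.card = n) (hpf : PairFree n I) {j : ℕ} (hj : j ∈ Finset.Icc 1 n) :
    j ∈ I ∨ 2*n+1-j ∈ I := by
  by_contra h
  push_neg at h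
  have hinj : Set.InjOn (fun i => min i (2*n+1-i)) I := by
    intro x hx y hy hxy
    have hx' := Finset.mem_Icc.mp (hsub hx)
    have hy' := Finset.mem_Icc.mp (hsub hy)
    simp only at hxy
    by_contra hne
    have hyx : y = 2*n+1-x := by omega
    have hc : min x (2*n+1-x) ∈ Finset.Icc 1 n := by
      simp only [Finset.mem_Icc]; omega
    refine hpf _ hc ⟨?_, ?_⟩
    · rcases min_choice x (2*n+1-x) with hm | hm <;> rw [hm]
      · exact hx
      · rw [← hyx]; exact hy
    · rcases min_choice x (2*n+1-x) with hm | hm <;> rw [hm]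
      · rw [← hyx]; exact hy
      · rw [show 2*n+1-(2*n+1-x) = x by omega]; exact hx
  have himg : I.image (fun i => min i (2*n+1-i)) = Finset.Icc 1 n := by
    apply Finset.eq_of_subset_of_card_le
    · intro x hx
      obtain ⟨i, hi, rfl⟩ := Finset.mem_image.mp hx
      have := Finset.mem_Icc.mp (hsub hi)
      simp only [Finset.mem_Icc]
      omega
    · rw [Finset.card_image_of_injOn hinj, hcard, Nat.card_Icc]
      omega
  have hj2 : j ∈ I.image (fun i => min i (2*n+1-i)) := himg ▸ hj
  obtain ⟨i, hi, hmin⟩ := Finset.mem_image.mp hj2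
  have hib := Finset.mem_Icc.mp (hsub hi)
  have hjb := Finset.mem_Icc.mp hj
  replace hmin : min i (2*n+1-i) = j := hmin
  have : i = j ∨ i = 2*n+1-j := by omega
  rcases this with rfl | rfl
  · exact h.1 hi
  · exact h.2 hi

lemma forall2_sum_le : ∀ {l1 l2 : List ℕ}, List.Forall₂ (· ≤ ·) l1 l2 → l1.sum ≤ l2.sum := by
  intro l1 l2 h
  induction h with
  | nil => exact le_rfl
  | cons h _ ih => simp only [List.sum_cons]; omega

lemma sort_sum (s : Finset ℕ) : (s.sort (· ≤ ·)).sum = ∑ x ∈ s, x := by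
  rw [List.Perm.sum_eq (Finset.sort_perm_toList (s := s) (r := (· ≤ ·)))]
  rw [Finset.sum_eq_multiset_sum]
  simp [Finset.toList, Multiset.sum_toList]

lemma mem_neck_one_iff {n : ℕ} {f : Equiv.Perm ℕ} {W : Finset ℕ} (hf : IsDecPermC n f W)
    {i : ℕ} (hi : i ∈ Finset.Icc 1 (2*n)) (hni : f.symm i ≠ i) :
    (i ∈ necklaceOf n f W 1 ↔ i < f.symm i) := by
  obtain ⟨hmap, hsym, hW, hWiff⟩ := hf
  have hfi := Finset.mem_Icc.mp (symm_mem_Icc hmap hi)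
  have hib := Finset.mem_Icc.mp hi
  have h2n : (1:ℕ) ≤ 2*n := by omega
  constructor
  · intro h
    rcases Finset.mem_union.mp h with h | h
    · have hc := (Finset.mem_filter.mp h).2.2
      rw [clt_iff le_rfl h2n hib.2 hfi.2] at hc
      split_ifs at hc <;> omega
    · have hfix : f.symm i = i := by
        conv_lhs => rw [← (hW i h).2]
        exact f.symm_apply_apply i
      exact absurd hfix hni
  · intro h
    apply Finset.mem_union_left
    refine Finset.mem_filter.mpr ⟨hi, Ne.symm hni, ?_⟩
    rw [clt_iff le_rfl h2n hib.2 hfi.2]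
    split_ifs <;> omega

lemma neck_one_pair {n : ℕ} {f : Equiv.Perm ℕ} {W : Finset ℕ} (hf : IsDecPermC n f W)
    {j : ℕ} (hj : j ∈ Finset.Icc 1 (2*n)) :
    (j ∈ necklaceOf n f W 1 ↔ 2*n+1-j ∉ necklaceOf n f W 1) := by
  have hjb := Finset.mem_Icc.mp hj
  have hj' : 2*n+1-j ∈ Finset.Icc 1 (2*n) := by simp only [Finset.mem_Icc]; omega
  have hsp : f.symm (2*n+1-j) = 2*n+1 - f.symm j := symm_prime hf.1 hf.2.1 hj
  have hb := Finset.mem_Icc.mp (symm_mem_Icc hf.1 hj)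
  by_cases hfix : f.symm j = j
  · have hfj : f j = j := by
      conv_lhs => rw [← hfix]
      exact f.apply_symm_apply j
    have hfix' : f.symm (2*n+1-j) = 2*n+1-j := by rw [hsp, hfix]
    have h1 : j ∈ necklaceOf n f W 1 ↔ j ∈ W := by
      unfold necklaceOf
      simp only [Finset.mem_union, Finset.mem_filter]
      constructor
      · rintro (⟨_, hne, _⟩ | h)
        · exact absurd hfix.symm hne
        · exact h
      · exact Or.inr
    have h2 : 2*n+1-j ∈ necklaceOf n f W 1 ↔ 2*n+1-j ∈ W := by
      unfold necklaceOf
      simp only [Finset.mem_union, Finset.mem_filter]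
      constructor
      · rintro (⟨_, hne, _⟩ | h)
        · exact absurd hfix'.symm hne
        · exact h
      · exact Or.inr
    rw [h1, h2]
    exact hf.2.2.2 j hj hfj
  · have hfix' : f.symm (2*n+1-j) ≠ 2*n+1-j := by rw [hsp]; omega
    rw [mem_neck_one_iff hf hj hfix, mem_neck_one_iff hf hj' hfix', hsp]
    omega

end Aux

/-- If `I` is a pair-free element of a weakly separated
collection in `M`, `a ∈ [n]`, `f⁻¹(a) ∈ [n]` and `f⁻¹(a) < a`, then `a' ∈ I`. -/
theorem statement10 (n : ℕ) (f : Equiv.Perm ℕ) (W : Finset ℕ)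
    (hf : IsDecPermC n f W)
    (C : Finset (Finset ℕ)) (hC : IsWSCollIn n (necklaceOf n f W) C)
    (I : Finset ℕ) (hI : I ∈ C) (hpf : PairFree n I)
    (a : ℕ) (ha : a ∈ Finset.Icc 1 n) (hfa : f.symm a ∈ Finset.Icc 1 n)
    (hlt : f.symm a < a) :
    2 * n + 1 - a ∈ I := by
  by_contra hna
  obtain ⟨hCmem, hCpos, hCws⟩ := hC
  have hab := Finset.mem_Icc.mp ha
  have hbb := Finset.mem_Icc.mp hfa
  have hn1 : 1 ≤ n := le_trans hab.1 hab.2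
  have haIcc : a ∈ Finset.Icc 1 (2*n) := by simp only [Finset.mem_Icc]; omega
  have ha'Icc : 2*n+1-a ∈ Finset.Icc 1 (2*n) := by simp only [Finset.mem_Icc]; omega
  set J := necklaceOf n f W 1 with hJdef
  have hJC : J ∈ C := hCmem 1 (by simp only [Finset.mem_Icc]; omega)
  obtain ⟨Isub, Icard, hGale⟩ := hCpos I hI
  obtain ⟨Jsub', -, -⟩ := hCpos J hJC
  have Jsub : J ⊆ Finset.Icc 1 (2*n) := Jsub'
  -- membership facts for a
  have hbne : f.symm a ≠ a := by omega
  have haI : a ∈ I := by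
    rcases pairfree_cover Isub Icard hpf ha with h | h
    · exact h
    · exact absurd h hna
  have haJ : a ∉ J := by
    intro h
    have := (mem_neck_one_iff hf haIcc hbne).mp h
    omega
  have hsp : f.symm (2*n+1-a) = 2*n+1 - f.symm a := symm_prime hf.1 hf.2.1 haIcc
  have ha'J : 2*n+1-a ∈ J := by
    rw [mem_neck_one_iff hf ha'Icc (by rw [hsp]; omega), hsp]
    omega
  have haD : a ∈ I \ J := Finset.mem_sdiff.mpr ⟨haI, haJ⟩
  have ha'D : 2*n+1-a ∈ J \ I := Finset.mem_sdiff.mpr ⟨ha'J, hna⟩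
  -- I contains exactly one of each pair
  have hInot : ∀ x ∈ Finset.Icc 1 (2*n), x ∈ I → 2*n+1-x ∉ I := by
    intro x hx hxI hxI'
    have hxb := Finset.mem_Icc.mp hx
    by_cases hxn : x ≤ n
    · exact hpf x (by simp only [Finset.mem_Icc]; omega) ⟨hxI, hxI'⟩
    · refine hpf (2*n+1-x) (by simp only [Finset.mem_Icc]; omega) ⟨hxI', ?_⟩
      rw [show 2*n+1-(2*n+1-x) = x by omega]
      exact hxI
  have hIin : ∀ x ∈ Finset.Icc 1 (2*n), x ∉ I → 2*n+1-x ∈ I := by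
    intro x hx hxI
    have hxb := Finset.mem_Icc.mp hx
    by_cases hxn : x ≤ n
    · rcases pairfree_cover Isub Icard hpf (j := x) (by simp only [Finset.mem_Icc]; omega)
        with h | h
      · exact absurd h hxI
      · exact h
    · rcases pairfree_cover Isub Icard hpf (j := 2*n+1-x) (by simp only [Finset.mem_Icc]; omega)
        with h | h
      · exact h
      · rw [show 2*n+1-(2*n+1-x) = x by omega] at h
        exact absurd h hxI
  -- the key image identity : (I \ J).image prime = J \ I
  have himg : (I \ J).image (fun x => 2*n+1-x) = J \ I := by
    ext y
    simp only [Finset.mem_image, Finset.mem_sdiff]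
    constructor
    · rintro ⟨x, ⟨hxI, hxJ⟩, rfl⟩
      have hxIcc := Isub hxI
      refine ⟨?_, hInot x hxIcc hxI⟩
      by_contra h
      exact hxJ ((neck_one_pair hf hxIcc).mpr h)
    · rintro ⟨hyJ, hyI⟩
      have hyIcc := Jsub hyJ
      have hyb := Finset.mem_Icc.mp hyIcc
      refine ⟨2*n+1-y, ⟨hIin y hyIcc hyI, ?_⟩, by omega⟩
      intro h
      exact ((neck_one_pair hf (by simp only [Finset.mem_Icc]; omega)).mp h)
        (by rw [show 2*n+1-(2*n+1-y) = y by omega]; exact hyJ)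
  -- all elements of I \ J lie in [1, n]
  have hws : WSep (2*n) I J := hCws I hI J hJC
  have h2n1 : (1:ℕ) ≤ 2*n := by omega
  have hside : ∀ y ∈ I \ J, y ≤ n := by
    intro y hy
    by_contra hyn
    push_neg at hyn
    obtain ⟨hyI, hyJ⟩ := Finset.mem_sdiff.mp hy
    have hyIcc := Isub hyI
    have hyb := Finset.mem_Icc.mp hyIcc
    have hy'D : 2*n+1-y ∈ J \ I := by
      rw [← himg]
      exact Finset.mem_image.mpr ⟨y, hy, rfl⟩
    rcases lt_trichotomy a (2*n+1-y) with hcase | hcase | hcase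
    · -- a < y' : witness (c, x1, x2, x3, x4) = (1, a, y', y, a')
      refine hws ⟨1, a, 2*n+1-y, y, 2*n+1-a, by simp only [Finset.mem_Icc]; omega,
        haD, hy, hy'D, ha'D, ?_, ?_, ?_⟩ <;>
        · rw [clt_iff le_rfl h2n1 (by omega) (by omega)]
          split_ifs <;> omega
    · exact hna (by rw [show 2*n+1-a = y by omega]; exact hyI)
    · -- y' < a : witness (c, x1, x2, x3, x4) = (a, a, a', y, y')
      refine hws ⟨a, a, 2*n+1-a, y, 2*n+1-y, by simp only [Finset.mem_Icc]; omega,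
        haD, hy, ha'D, hy'D, ?_, ?_, ?_⟩ <;>
        · rw [clt_iff (by omega) (by omega) (by omega) (by omega)]
          split_ifs <;> omega
  -- Gale inequality at basepoint 1 : sums of positions
  have hg : galeLe (2*n) 1 J I := hGale 1 (by simp only [Finset.mem_Icc]; omega)
  have hcpos1 : ∀ x ∈ Finset.Icc 1 (2*n), cpos (2*n) 1 x = x - 1 := by
    intro x hx
    have hxb := Finset.mem_Icc.mp hx
    rw [cpos_eq le_rfl h2n1 hxb.2, if_pos hxb.1]
  have hsum_of : ∀ (S : Finset ℕ), S ⊆ Finset.Icc 1 (2*n) →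
      (Finset.sort (S.image (cpos (2*n) 1)) (· ≤ ·)).sum = ∑ x ∈ S, cpos (2*n) 1 x := by
    intro S hS
    rw [sort_sum]
    apply Finset.sum_image
    intro x hx y hy hxy
    rw [hcpos1 x (hS hx), hcpos1 y (hS hy)] at hxy
    have h1 := Finset.mem_Icc.mp (hS hx)
    have h2 := Finset.mem_Icc.mp (hS hy)
    omega
  have key1 : ∑ x ∈ J, cpos (2*n) 1 x ≤ ∑ x ∈ I, cpos (2*n) 1 x := by
    have h := forall2_sum_le hg
    rwa [hsum_of J Jsub, hsum_of I Isub] at h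
  -- combinatorial strict inequality the other way
  have hdiffsum : ∑ y ∈ J \ I, cpos (2*n) 1 y = ∑ x ∈ I \ J, cpos (2*n) 1 (2*n+1-x) := by
    rw [← himg]
    apply Finset.sum_image
    intro x hx y hy hxy
    have h1 := Finset.mem_Icc.mp (Isub (Finset.mem_sdiff.mp hx).1)
    have h2 := Finset.mem_Icc.mp (Isub (Finset.mem_sdiff.mp hy).1)
    simp only at hxy
    omega
  have hstrict : ∑ x ∈ I \ J, cpos (2*n) 1 x < ∑ y ∈ J \ I, cpos (2*n) 1 y := by
    rw [hdiffsum]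
    apply Finset.sum_lt_sum_of_nonempty ⟨a, haD⟩
    intro x hx
    have hxb := Finset.mem_Icc.mp (Isub (Finset.mem_sdiff.mp hx).1)
    have hxn := hside x hx
    rw [hcpos1 x (by simp only [Finset.mem_Icc]; omega),
      hcpos1 (2*n+1-x) (by simp only [Finset.mem_Icc]; omega)]
    omega
  have key2 : ∑ x ∈ I, cpos (2*n) 1 x < ∑ x ∈ J, cpos (2*n) 1 x := by
    calc ∑ x ∈ I, cpos (2*n) 1 x
        = ∑ x ∈ I ∩ J, cpos (2*n) 1 x + ∑ x ∈ I \ J, cpos (2*n) 1 x :=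
          (Finset.sum_inter_add_sum_sdiff I J _).symm
      _ < ∑ x ∈ I ∩ J, cpos (2*n) 1 x + ∑ y ∈ J \ I, cpos (2*n) 1 y :=
          Nat.add_lt_add_left hstrict _
      _ = ∑ x ∈ J, cpos (2*n) 1 x := by
          rw [Finset.inter_comm]
          exact Finset.sum_inter_add_sum_sdiff J I _
  omega
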